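/- For every x ∈ ℝ³ and every direction v ∈ ℝ³, the pull-backs of the Maurer–Cartan form by H and G are related by H(x)⁻¹·DH(x)[v] = G(x)⁻¹·DG(x)[v] + G(x)⁻¹·(G(x)⁻¹·DG(x)[v])·G(x). -/

import Mathlib

open Matrix Complex

noncomputable section

attribute [local instance] Matrix.normedAddCommGroup Matrix.normedSpace

abbrev Mat := Matrix (Fin 2) (Fin 2) ℂ

/-- The Pauli matrices τ₁, τ₂, τ₃. -/
def pauli : Fin 3 → Matrix (Fin 2) (Fin 2) ℂ :=
  ![!![0, 1; 1, 0], !![0, -I; I, 0], !![1, 0; 0, -1]]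

/-- The Pauli vector x·τ = x₁τ₁ + x₂τ₂ + x₃τ₃ for x ∈ ℝ³. -/
def pauliVec (x : EuclideanSpace ℝ (Fin 3)) : Matrix (Fin 2) (Fin 2) ℂ :=
  (x 0 : ℂ) • pauli 0 + (x 1 : ℂ) • pauli 1 + (x 2 : ℂ) • pauli 2

lemma norm_sq_eq (x : EuclideanSpace ℝ (Fin 3)) :
    ‖x‖ ^ 2 = x 0 ^ 2 + x 1 ^ 2 + x 2 ^ 2 := by
  rw [EuclideanSpace.norm_eq, Real.sq_sqrt (by positivity)]
  simp [Fin.sum_univ_three, sq_abs]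

lemma pauliVec_eq (x : EuclideanSpace ℝ (Fin 3)) :
    pauliVec x = !![(x 2 : ℂ), (x 0 : ℂ) - (x 1 : ℂ) * I;
                    (x 0 : ℂ) + (x 1 : ℂ) * I, -(x 2 : ℂ)] := by
  simp [pauliVec, pauli]
  ring

lemma pauliVec_sq (x : EuclideanSpace ℝ (Fin 3)) :
    pauliVec x * pauliVec x = ((‖x‖ ^ 2 : ℝ) : ℂ) • 1 := by
  rw [pauliVec_eq, norm_sq_eq]
  ext i j
  fin_cases i <;> fin_cases j <;>
    simp [Matrix.mul_apply, Fin.sum_univ_two, Matrix.one_apply] <;>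
    push_cast <;> ring_nf <;> simp [I_sq] <;> ring


/-- G(x) = (ℓ·I + i x·τ)/√(ℓ² + r²), the inverse gnomonic projection. -/
def Gmap (ℓ : ℝ) (x : EuclideanSpace ℝ (Fin 3)) : Matrix (Fin 2) (Fin 2) ℂ :=
  (((Real.sqrt (ℓ ^ 2 + ‖x‖ ^ 2))⁻¹ : ℝ) : ℂ) •
    ((ℓ : ℂ) • (1 : Matrix (Fin 2) (Fin 2) ℂ) + I • pauliVec x)

/-- H(x) = ((ℓ² − r²)·I + 2iℓ x·τ)/(ℓ² + r²), the inverse stereographic projection. -/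
def Hmap (ℓ : ℝ) (x : EuclideanSpace ℝ (Fin 3)) : Matrix (Fin 2) (Fin 2) ℂ :=
  ((((ℓ ^ 2 + ‖x‖ ^ 2))⁻¹ : ℝ) : ℂ) •
    (((ℓ ^ 2 - ‖x‖ ^ 2 : ℝ) : ℂ) • (1 : Matrix (Fin 2) (Fin 2) ℂ)
      + ((2 * ℓ : ℝ) : ℂ) • I • pauliVec x)

lemma Hmap_eq_sq (ℓ : ℝ) (hℓ : 0 < ℓ) (x : EuclideanSpace ℝ (Fin 3)) :
    Hmap ℓ x = Gmap ℓ x * Gmap ℓ x := by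
  have hs : (0:ℝ) < ℓ ^ 2 + ‖x‖ ^ 2 := by positivity
  have hsq : ((((Real.sqrt (ℓ ^ 2 + ‖x‖ ^ 2))⁻¹ : ℝ)) : ℂ) * ((((Real.sqrt (ℓ ^ 2 + ‖x‖ ^ 2))⁻¹ : ℝ)) : ℂ)
      = (((ℓ ^ 2 + ‖x‖ ^ 2)⁻¹ : ℝ) : ℂ) := by
    rw [← ofReal_mul]
    norm_cast
    rw [← mul_inv, Real.mul_self_sqrt hs.le]
  have hP := pauliVec_sq x
  rw [Hmap, Gmap, smul_mul_assoc, mul_smul_comm, smul_smul ((((Real.sqrt (ℓ ^ 2 + ‖x‖ ^ 2))⁻¹ : ℝ)) : ℂ), hsq]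
  congr 1
  simp only [mul_add, add_mul, smul_mul_assoc, mul_smul_comm, one_mul, mul_one, hP,
    smul_smul, I_mul_I]
  match_scalars <;> · push_cast; ring_nf; try (simp only [I_sq]; ring_nf)

lemma det_Gmap (ℓ : ℝ) (hℓ : 0 < ℓ) (x : EuclideanSpace ℝ (Fin 3)) :
    (Gmap ℓ x).det = 1 := by
  have hs : (0:ℝ) < ℓ ^ 2 + ‖x‖ ^ 2 := by positivity
  rw [Gmap, pauliVec_eq, Matrix.det_smul]
  simp [Matrix.det_fin_two, Matrix.one_apply]
  have h2 : ((((Real.sqrt (ℓ ^ 2 + ‖x‖ ^ 2))⁻¹ : ℝ)) : ℂ) ^ 2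
      = (((ℓ ^ 2 + ‖x‖ ^ 2)⁻¹ : ℝ) : ℂ) := by
    norm_cast
    rw [← Real.sqrt_inv, Real.sq_sqrt (by positivity)]
  have h3 : ((Real.sqrt (ℓ ^ 2 + ‖x‖ ^ 2) : ℝ) : ℂ) ^ 2 = ((ℓ ^ 2 + ‖x‖ ^ 2 : ℝ) : ℂ) := by
    norm_cast
    exact Real.sq_sqrt hs.le
  have hdet : ((ℓ:ℂ) + I * (x 2:ℂ)) * ((ℓ:ℂ) + -(I * (x 2:ℂ)))
      - I * ((x 0:ℂ) - (x 1:ℂ) * I) * (I * ((x 0:ℂ) + (x 1:ℂ) * I))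
      = ((ℓ ^ 2 + ‖x‖ ^ 2 : ℝ) : ℂ) := by
    push_cast [norm_sq_eq]
    ring_nf
    simp only [I_sq, Complex.I_pow_four]
    ring_nf
  rw [h3, hdet, inv_mul_cancel₀ (by exact_mod_cast hs.ne')]

def mulCLM : Mat →L[ℝ] Mat →L[ℝ] Mat :=
  LinearMap.toContinuousLinearMap <|
    { toFun := fun A => LinearMap.toContinuousLinearMap (LinearMap.mulLeft ℝ A)
      map_add' := by intro A B; ext C; simp [add_mul]
      map_smul' := by intro c A; ext C; simp [smul_mul_assoc] }

lemma mulCLM_apply (A B : Mat) : mulCLM A B = A * B := rfl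

lemma hasFDerivAt_pauliVec (x : EuclideanSpace ℝ (Fin 3)) :
    DifferentiableAt ℝ pauliVec x := by
  have h : ∀ i : Fin 3, DifferentiableAt ℝ
      (fun y : EuclideanSpace ℝ (Fin 3) => ((y i : ℝ) : ℂ) • pauli i) x := by
    intro i
    exact DifferentiableAt.smul_const (F := Mat)
      (Complex.ofRealCLM.differentiableAt.comp x
        (EuclideanSpace.proj (i : Fin 3)).differentiableAt) (pauli i)
  exact ((h 0).add (h 1)).add (h 2)

lemma diff_Gmap (ℓ : ℝ) (hℓ : 0 < ℓ) (x : EuclideanSpace ℝ (Fin 3)) :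
    DifferentiableAt ℝ (Gmap ℓ) x := by
  have hs : (0:ℝ) < ℓ ^ 2 + ‖x‖ ^ 2 := by positivity
  have h1 : DifferentiableAt ℝ (fun y : EuclideanSpace ℝ (Fin 3) => ℓ ^ 2 + ‖y‖ ^ 2) x := by
    exact (differentiableAt_const _).add
      (((contDiff_norm_sq ℝ (E := EuclideanSpace ℝ (Fin 3))).differentiable one_ne_zero) x)
  have h2 : DifferentiableAt ℝ (fun y : EuclideanSpace ℝ (Fin 3) =>
      ((Real.sqrt (ℓ ^ 2 + ‖y‖ ^ 2))⁻¹ : ℝ)) x :=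
    (h1.sqrt hs.ne').inv (Real.sqrt_ne_zero'.mpr hs)
  have h3 : DifferentiableAt ℝ (fun y : EuclideanSpace ℝ (Fin 3) =>
      (((Real.sqrt (ℓ ^ 2 + ‖y‖ ^ 2))⁻¹ : ℝ) : ℂ)) x :=
    Complex.ofRealCLM.differentiableAt.comp x h2
  have h4 : DifferentiableAt ℝ (fun y : EuclideanSpace ℝ (Fin 3) =>
      (ℓ : ℂ) • (1 : Mat) + I • pauliVec y) x :=
    (differentiableAt_const _).add ((hasFDerivAt_pauliVec x).const_smul I)
  exact h3.smul h4


/-- the pull-backs of the Maurer–Cartan form by H and G are related by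
H⁻¹dH = G⁻¹dG + G⁻¹(G⁻¹dG)G. -/
theorem Hinv_dH_eq_Ginv_dG_add_conj (ℓ : ℝ) (hℓ : 0 < ℓ)
    (x v : EuclideanSpace ℝ (Fin 3)) :
    (Hmap ℓ x)⁻¹ * fderiv ℝ (Hmap ℓ) x v =
      (Gmap ℓ x)⁻¹ * fderiv ℝ (Gmap ℓ) x v +
        (Gmap ℓ x)⁻¹ * ((Gmap ℓ x)⁻¹ * fderiv ℝ (Gmap ℓ) x v) * Gmap ℓ x := by
  have hdet : IsUnit (Gmap ℓ x).det := by rw [det_Gmap ℓ hℓ]; exact isUnit_one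
  have hGinvG : (Gmap ℓ x)⁻¹ * Gmap ℓ x = 1 := Matrix.nonsing_inv_mul _ hdet
  have hG : HasFDerivAt (Gmap ℓ) (fderiv ℝ (Gmap ℓ) x) x := (diff_Gmap ℓ hℓ x).hasFDerivAt
  have hfun : Hmap ℓ = fun y => mulCLM (Gmap ℓ y) (Gmap ℓ y) :=
    funext fun y => Hmap_eq_sq ℓ hℓ y
  have hH : HasFDerivAt (Hmap ℓ)
      (mulCLM.precompR _ (Gmap ℓ x) (fderiv ℝ (Gmap ℓ) x)
        + mulCLM.precompL _ (fderiv ℝ (Gmap ℓ) x) (Gmap ℓ x)) x := by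
    rw [hfun]
    exact mulCLM.hasFDerivAt_of_bilinear hG hG
  have hfdH : fderiv ℝ (Hmap ℓ) x v
      = Gmap ℓ x * fderiv ℝ (Gmap ℓ) x v + fderiv ℝ (Gmap ℓ) x v * Gmap ℓ x := by
    erw [hH.fderiv]
    simp [ContinuousLinearMap.precompR, ContinuousLinearMap.precompL, mulCLM_apply]
    rfl
  have hHinv : (Hmap ℓ x)⁻¹ = (Gmap ℓ x)⁻¹ * (Gmap ℓ x)⁻¹ := by
    rw [Hmap_eq_sq ℓ hℓ, Matrix.mul_inv_rev]
  set G := Gmap ℓ x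
  set D := fderiv ℝ (Gmap ℓ) x v
  rw [hHinv, hfdH, mul_add]
  have e1 : G⁻¹ * G⁻¹ * (G * D) = G⁻¹ * D := by
    rw [mul_assoc, ← mul_assoc G⁻¹ G D, hGinvG, one_mul]
  have e2 : G⁻¹ * G⁻¹ * (D * G) = G⁻¹ * (G⁻¹ * D) * G := by
    simp [mul_assoc]
  rw [e1, e2]
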